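/- Let ω > −λ > 0 (so λ < 0 and ω > |λ|), and let τ : [0,∞) → ℝ be twice differentiable with τ(t) > 0 for all t ≥ 0, satisfying τ″ = 2λ/τ + 1/τ³ + ω²τ on [0,∞). Then τ(t) → ∞ as t → ∞, and there exist constants C₁, C₂ > 0 and T ≥ 0 such that C₁ e^{ωt} ≤ τ(t) ≤ C₂ e^{ωt} for all t ≥ T. Consequently every Gaussian solution of the equation disperses exponentially fast. -/

import Mathlib

open Filter Real

set_option maxHeartbeats 1000000

private lemma monoAux {a : ℝ} {f f' : ℝ → ℝ}
    (hf : ∀ t, a ≤ t → HasDerivAt f (f' t) t)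
    (h0 : ∀ t, a < t → 0 ≤ f' t) :
    ∀ s t, a ≤ s → s ≤ t → f s ≤ f t := by
  have hm : MonotoneOn f (Set.Ici a) := by
    apply monotoneOn_of_deriv_nonneg (convex_Ici a)
    · exact fun t ht => (hf t ht).continuousAt.continuousWithinAt
    · intro t ht
      rw [interior_Ici] at ht
      exact (hf t ht.le).differentiableAt.differentiableWithinAt
    · intro t ht
      rw [interior_Ici] at ht
      rw [(hf t ht.le).deriv]
      exact h0 t ht
  exact fun s t hs hst => hm hs (hs.trans hst) hst

private lemma antiAux {a : ℝ} {f f' : ℝ → ℝ}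
    (hf : ∀ t, a ≤ t → HasDerivAt f (f' t) t)
    (h0 : ∀ t, a < t → f' t ≤ 0) :
    ∀ s t, a ≤ s → s ≤ t → f t ≤ f s := by
  have h := monoAux (f := fun u => -f u) (f' := fun u => -f' u)
    (fun t ht => (hf t ht).neg) (fun t ht => neg_nonneg.mpr (h0 t ht))
  intro s t hs hst
  have h2 : -f s ≤ -f t := h s t hs hst
  linarith

private lemma expDeriv (c t : ℝ) :
    HasDerivAt (fun s => Real.exp (c * s)) (c * Real.exp (c * t)) t := by
  simpa [mul_comm] using ((hasDerivAt_id t).const_mul c).exp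

/-- For `ω > −λ > 0`, every positive twice differentiable solution of
`τ″ = 2λ/τ + 1/τ³ + ω²τ` on `[0,∞)` tends to `+∞`, and grows exactly like `e^{ωt}`:
there are `C₁, C₂ > 0` and `T ≥ 0` with `C₁e^{ωt} ≤ τ(t) ≤ C₂e^{ωt}` for `t ≥ T`.
Consequently every Gaussian solution disperses exponentially fast. -/
theorem ode_exponential_growth
    (lam ω : ℝ) (hlam : lam < 0) (hlo : -lam < ω)
    (τ τ' τ'' : ℝ → ℝ)
    (hd1 : ∀ t, 0 ≤ t → HasDerivAt τ (τ' t) t)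
    (hd2 : ∀ t, 0 ≤ t → HasDerivAt τ' (τ'' t) t)
    (hpos : ∀ t, 0 ≤ t → 0 < τ t)
    (hode : ∀ t, 0 ≤ t → τ'' t = 2 * lam / τ t + 1 / (τ t) ^ 3 + ω ^ 2 * τ t) :
    Filter.Tendsto τ Filter.atTop Filter.atTop ∧
    ∃ C₁ > (0 : ℝ), ∃ C₂ > (0 : ℝ), ∃ T ≥ (0 : ℝ), ∀ t, T ≤ t →
      C₁ * Real.exp (ω * t) ≤ τ t ∧ τ t ≤ C₂ * Real.exp (ω * t) := by
  have hω : 0 < ω := by linarith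
  have hω2 : lam ^ 2 < ω ^ 2 := by nlinarith
  have hωsq : (0:ℝ) < ω ^ 2 := by nlinarith
  -- basic identity
  have hτeq : ∀ t, 0 ≤ t → τ'' t * (τ t) ^ 3
      = ω ^ 2 * (τ t) ^ 4 + 2 * lam * (τ t) ^ 2 + 1 := by
    intro t ht
    have hx := (hpos t ht).ne'
    rw [hode t ht]
    field_simp
    ring
  -- τ'' is strictly positive
  have hpp : ∀ t, 0 ≤ t → 0 < τ'' t := by
    intro t ht
    have hx := hpos t ht
    have key : 0 < ω ^ 2 * (τ t) ^ 4 + 2 * lam * (τ t) ^ 2 + 1 := by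
      nlinarith [sq_nonneg (ω ^ 2 * (τ t) ^ 2 + lam), mul_pos hω hω]
    nlinarith [hτeq t ht, pow_pos hx 3]
  -- there is a point where τ' > 0
  have hex : ∃ t₀, 0 ≤ t₀ ∧ 0 < τ' t₀ := by
    by_contra h
    push_neg at h
    have hanti : ∀ s t, 0 ≤ s → s ≤ t → τ t ≤ τ s :=
      antiAux hd1 (fun u hu => h u hu.le)
    have hτ00 : 0 < τ 0 := hpos 0 le_rfl
    set c := (1 - lam ^ 2 / ω ^ 2) / (τ 0) ^ 3 with hc
    have hfrac : lam ^ 2 / ω ^ 2 < 1 := by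
      rw [div_lt_one hωsq]; exact hω2
    have hcpos : 0 < c := div_pos (by linarith) (pow_pos hτ00 3)
    have hcle : ∀ t, 0 ≤ t → c ≤ τ'' t := by
      intro t ht
      have hx := hpos t ht
      have hxle : τ t ≤ τ 0 := hanti 0 t le_rfl ht
      have h1 : lam ^ 2 / ω ^ 2 * ω ^ 2 = lam ^ 2 :=
        div_mul_cancel₀ _ hωsq.ne'
      have hnum : 1 - lam ^ 2 / ω ^ 2
          ≤ ω ^ 2 * (τ t) ^ 4 + 2 * lam * (τ t) ^ 2 + 1 := by
        nlinarith [sq_nonneg (ω ^ 2 * (τ t) ^ 2 + lam), mul_pos hω hω]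
      have hcube : (τ t) ^ 3 ≤ (τ 0) ^ 3 := pow_le_pow_left₀ hx.le hxle 3
      rw [hc, div_le_iff₀ (pow_pos hτ00 3)]
      nlinarith [hτeq t ht, hpp t ht]
    have hmono : ∀ s t, (0:ℝ) ≤ s → s ≤ t → τ' s - c * s ≤ τ' t - c * t := by
      apply monoAux (f' := fun u => τ'' u - c)
      · intro u hu
        have := (hd2 u hu).sub ((hasDerivAt_id u).const_mul c)
        simp only [mul_one] at this
        exact this
      · intro u hu
        have := hcle u hu.le
        linarith
    have hτ'0 : τ' 0 ≤ 0 := h 0 le_rfl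
    set t₁ := (1 - τ' 0) / c with ht₁def
    have ht₁ : 0 ≤ t₁ := le_of_lt (div_pos (by linarith) hcpos)
    have h2 : τ' 0 - c * 0 ≤ τ' t₁ - c * t₁ := hmono 0 t₁ le_rfl ht₁
    have hct : c * t₁ = 1 - τ' 0 := by
      rw [ht₁def, mul_div_cancel₀ _ hcpos.ne']
    have : 0 < τ' t₁ := by rw [hct] at h2; linarith
    linarith [h t₁ ht₁]
  obtain ⟨t₀, ht₀, hp⟩ := hex
  set p := τ' t₀ with hpdef
  -- τ' is monotone, hence ≥ p beyond t₀
  have hτ'mono : ∀ s t, (0:ℝ) ≤ s → s ≤ t → τ' s ≤ τ' t :=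
    monoAux hd2 (fun u hu => (hpp u hu.le).le)
  have hτ'ge : ∀ t, t₀ ≤ t → p ≤ τ' t := fun t ht => hτ'mono t₀ t ht₀ ht
  -- linear growth of τ beyond t₀
  have hgrow : ∀ t, t₀ ≤ t → τ t₀ + p * (t - t₀) ≤ τ t := by
    have hm : ∀ s t, t₀ ≤ s → s ≤ t → τ s - p * s ≤ τ t - p * t := by
      apply monoAux (f' := fun u => τ' u - p)
      · intro u hu
        have := (hd1 u (ht₀.trans hu)).sub ((hasDerivAt_id u).const_mul p)
        simp only [mul_one] at this
        exact this
      · intro u hu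
        have := hτ'ge u hu.le
        linarith
    intro t ht
    have := hm t₀ t le_rfl ht
    linarith
  -- τ is monotone beyond t₀
  have hτmono : ∀ s t, t₀ ≤ s → s ≤ t → τ s ≤ τ t :=
    monoAux (fun u hu => hd1 u (ht₀.trans hu))
      (fun u hu => le_of_lt (lt_of_lt_of_le hp (hτ'ge u hu.le)))
  -- tendsto atTop
  have htend : Tendsto τ atTop atTop := by
    have h1 : Tendsto (fun t : ℝ => τ t₀ + p * (t - t₀)) atTop atTop := by
      apply tendsto_atTop_add_const_left
      apply Tendsto.const_mul_atTop hp
      simpa [sub_eq_add_neg] using tendsto_atTop_add_const_right atTop (-t₀) tendsto_id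
    exact tendsto_atTop_mono' _ (eventually_atTop.mpr ⟨t₀, hgrow⟩) h1
  -- threshold R and time T
  set R := 1 + 1 / (-(2 * lam)) + 1 / (2 * ω) + (1 - 2 * lam / ω) / ω with hRdef
  have hRa : 0 < 1 / (-(2 * lam)) := one_div_pos.mpr (by linarith)
  have hRb : 0 < 1 / (2 * ω) := one_div_pos.mpr (by linarith)
  have h2lamω : 2 * lam / ω < 0 := div_neg_of_neg_of_pos (by linarith) hω
  have hRc : 0 < (1 - 2 * lam / ω) / ω := div_pos (by linarith) hω
  have hRpos : 0 < R := by rw [hRdef]; linarith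
  set T := t₀ + R / p with hTdef
  have hTt₀ : t₀ ≤ T := by
    have : 0 ≤ R / p := le_of_lt (div_pos hRpos hp)
    rw [hTdef]; linarith
  have hT0 : 0 ≤ T := ht₀.trans hTt₀
  have hτT : R ≤ τ T := by
    have h1 := hgrow T hTt₀
    have h2 : p * (T - t₀) = R := by
      rw [hTdef, add_sub_cancel_left, mul_div_cancel₀ _ hp.ne']
    rw [h2] at h1
    linarith [hpos t₀ ht₀]
  have hτge : ∀ t, T ≤ t → R ≤ τ t :=
    fun t ht => hτT.trans (hτmono T t hTt₀ ht)
  have hτ1 : ∀ t, T ≤ t → 1 ≤ τ t := by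
    intro t ht
    have := hτge t ht
    rw [hRdef] at this; linarith
  have hprod : ∀ t : ℝ, Real.exp (ω * t) * Real.exp ((-ω) * t) = 1 := by
    intro t
    rw [← Real.exp_add, show ω * t + (-ω) * t = 0 by ring, Real.exp_zero]
  ------------------------------------------------------------------
  -- UPPER BOUND
  ------------------------------------------------------------------
  have hsecub : ∀ t, T ≤ t → τ'' t ≤ ω ^ 2 * τ t := by
    intro t ht
    have h0t : (0:ℝ) ≤ t := hT0.trans ht
    have hx := hpos t h0t
    have h1 := hτ1 t ht
    have h2 : 1 / (-(2 * lam)) ≤ τ t := by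
      have := hτge t ht; rw [hRdef] at this; linarith [hRb, hRc]
    have h3 : 1 ≤ τ t * (-(2 * lam)) := by
      rw [div_le_iff₀ (by linarith : (0:ℝ) < -(2 * lam))] at h2; linarith
    have hneg : 2 * lam * (τ t) ^ 2 + 1 ≤ 0 := by nlinarith
    have h4 : 2 * lam / τ t + 1 / (τ t) ^ 3 ≤ 0 := by
      have he : 2 * lam / τ t + 1 / (τ t) ^ 3
          = (2 * lam * (τ t) ^ 2 + 1) / (τ t) ^ 3 := by
        field_simp
      rw [he]
      exact div_nonpos_of_nonpos_of_nonneg hneg (by positivity)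
    rw [hode t h0t]
    linarith
  have hFanti : ∀ s t, T ≤ s → s ≤ t →
      Real.exp (ω * t) * (τ' t - ω * τ t) ≤ Real.exp (ω * s) * (τ' s - ω * τ s) := by
    apply antiAux (f' := fun u => Real.exp (ω * u) * (τ'' u - ω ^ 2 * τ u))
    · intro u hu
      have h0u : (0:ℝ) ≤ u := hT0.trans hu
      have h := (expDeriv ω u).mul ((hd2 u h0u).sub ((hd1 u h0u).const_mul ω))
      refine h.congr_deriv ?_
      simp only [Pi.sub_apply]
      ring
    · intro u hu
      have h1 := hsecub u hu.le
      nlinarith [Real.exp_pos (ω * u)]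
  set M := Real.exp (ω * T) * (τ' T - ω * τ T) with hMdef
  have hHanti : ∀ s t, T ≤ s → s ≤ t →
      Real.exp ((-ω) * t) * τ t + (M / (2 * ω)) * Real.exp ((-(2 * ω)) * t)
      ≤ Real.exp ((-ω) * s) * τ s + (M / (2 * ω)) * Real.exp ((-(2 * ω)) * s) := by
    apply antiAux (f' := fun u =>
      ((-ω) * Real.exp ((-ω) * u)) * τ u + Real.exp ((-ω) * u) * τ' u
        + (M / (2 * ω)) * ((-(2 * ω)) * Real.exp ((-(2 * ω)) * u)))
    · intro u hu
      have h0u : (0:ℝ) ≤ u := hT0.trans hu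
      exact ((expDeriv (-ω) u).mul (hd1 u h0u)).add
        ((expDeriv (-(2 * ω)) u).const_mul (M / (2 * ω)))
    · intro u hu
      have hF : Real.exp (ω * u) * (τ' u - ω * τ u) ≤ M := by
        rw [hMdef]; exact hFanti T u le_rfl hu.le
      have hE2 : Real.exp ((-(2 * ω)) * u)
          = Real.exp ((-ω) * u) * Real.exp ((-ω) * u) := by
        rw [← Real.exp_add]; ring_nf
      rw [hE2, show M / (2 * ω) * (-(2 * ω) * (Real.exp ((-ω) * u) * Real.exp ((-ω) * u)))
          = -(M * (Real.exp ((-ω) * u) * Real.exp ((-ω) * u))) from by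
        field_simp]
      have h5 := mul_le_mul_of_nonneg_right hF
        (by positivity : (0:ℝ) ≤ Real.exp ((-ω) * u) * Real.exp ((-ω) * u))
      have h6 : Real.exp (ω * u) * (τ' u - ω * τ u)
          * (Real.exp ((-ω) * u) * Real.exp ((-ω) * u))
          = Real.exp ((-ω) * u) * (τ' u - ω * τ u) := by
        linear_combination (Real.exp ((-ω) * u) * (τ' u - ω * τ u)) * hprod u
      rw [h6] at h5
      nlinarith [h5]
    ------------------------------------------------------------------
  have hMbd : ∀ e : ℝ, 0 < e → e ≤ 1 → (M / (2 * ω)) * e ≤ |M| / (2 * ω) ∧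
      -((M / (2 * ω)) * e) ≤ |M| / (2 * ω) := by
    intro e he he1
    have h2ω : (0:ℝ) < 2 * ω := by linarith
    have hb : 0 ≤ |M| / (2 * ω) := div_nonneg (abs_nonneg M) h2ω.le
    constructor
    · have ha : M / (2 * ω) ≤ |M| / (2 * ω) :=
        (div_le_div_iff_of_pos_right h2ω).mpr (le_abs_self M)
      nlinarith
    · have ha : -(M / (2 * ω)) ≤ |M| / (2 * ω) := by
        rw [← neg_div]
        exact (div_le_div_iff_of_pos_right h2ω).mpr (neg_le_abs M)
      nlinarith
  have hexp_le_one : ∀ t : ℝ, 0 ≤ t → Real.exp ((-(2 * ω)) * t) ≤ 1 := by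
    intro t ht
    rw [Real.exp_le_one_iff]
    nlinarith [mul_nonneg hω.le ht]
  set C₂ := Real.exp ((-ω) * T) * τ T + |M| / ω with hC₂def
  have hC₂pos : 0 < C₂ := by
    have h1 : 0 < Real.exp ((-ω) * T) * τ T :=
      mul_pos (Real.exp_pos _) (hpos T hT0)
    have h2 : 0 ≤ |M| / ω := div_nonneg (abs_nonneg M) hω.le
    rw [hC₂def]; linarith
  have hub : ∀ t, T ≤ t → τ t ≤ C₂ * Real.exp (ω * t) := by
    intro t ht
    have h0t : (0:ℝ) ≤ t := hT0.trans ht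
    have hH := hHanti T t le_rfl ht
    have hbT := hMbd _ (Real.exp_pos ((-(2 * ω)) * T)) (hexp_le_one T hT0)
    have hbt := hMbd _ (Real.exp_pos ((-(2 * ω)) * t)) (hexp_le_one t h0t)
    have hEτ : Real.exp ((-ω) * t) * τ t ≤ C₂ := by
      rw [hC₂def]
      have hsplit : |M| / ω = |M| / (2 * ω) + |M| / (2 * ω) := by
        field_simp
        ring
      rw [hsplit]
      linarith [hbT.1, hbt.2]
    have h3 := mul_le_mul_of_nonneg_left hEτ (Real.exp_pos (ω * t)).le
    rw [← mul_assoc, hprod t, one_mul] at h3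
    linarith
  ------------------------------------------------------------------
  -- LOWER BOUND
  ------------------------------------------------------------------
  have hseclb : ∀ t, T ≤ t → ω ^ 2 * τ t + 2 * lam ≤ τ'' t := by
    intro t ht
    have h0t : (0:ℝ) ≤ t := hT0.trans ht
    have hx := hpos t h0t
    have h1 := hτ1 t ht
    have h2 : 2 * lam ≤ 2 * lam / τ t := by
      rw [le_div_iff₀ hx]; nlinarith
    have h3 : 0 < 1 / (τ t) ^ 3 := one_div_pos.mpr (pow_pos hx 3)
    rw [hode t h0t]
    linarith
  have hG1mono : ∀ s t, T ≤ s → s ≤ t →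
      Real.exp ((-ω) * s) * (τ' s + ω * τ s + 2 * lam / ω)
      ≤ Real.exp ((-ω) * t) * (τ' t + ω * τ t + 2 * lam / ω) := by
    apply monoAux (f' := fun u =>
      ((-ω) * Real.exp ((-ω) * u)) * (τ' u + ω * τ u + 2 * lam / ω)
        + Real.exp ((-ω) * u) * (τ'' u + ω * τ' u))
    · intro u hu
      have h0u : (0:ℝ) ≤ u := hT0.trans hu
      exact (expDeriv (-ω) u).mul
        (((hd2 u h0u).add ((hd1 u h0u).const_mul ω)).add_const (2 * lam / ω))
    · intro u hu
      have hc : ω * (2 * lam / ω) = 2 * lam := mul_div_cancel₀ _ hω.ne'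
      nlinarith [hseclb u hu.le, Real.exp_pos ((-ω) * u), hc]
  have hG1T : Real.exp ((-ω) * T)
      ≤ Real.exp ((-ω) * T) * (τ' T + ω * τ T + 2 * lam / ω) := by
    have hτ'T : 0 < τ' T := lt_of_lt_of_le hp (hτ'ge T hTt₀)
    have hωR : 1 - 2 * lam / ω ≤ ω * R := by
      have hcc : (1 - 2 * lam / ω) / ω * ω = 1 - 2 * lam / ω :=
        div_mul_cancel₀ _ hω.ne'
      rw [hRdef]
      nlinarith [hRa, hRb]
    have hωτ : 1 - 2 * lam / ω ≤ ω * τ T := by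
      exact le_trans hωR (mul_le_mul_of_nonneg_left hτT hω.le)
    have h1 : 1 ≤ τ' T + ω * τ T + 2 * lam / ω := by linarith
    nlinarith [Real.exp_pos ((-ω) * T), h1]
  have hulow : ∀ t, T ≤ t →
      Real.exp ((-ω) * T) * Real.exp (ω * t) ≤ τ' t + ω * τ t := by
    intro t ht
    have h1 := hG1T.trans (hG1mono T t le_rfl ht)
    have h2 := mul_le_mul_of_nonneg_left h1 (Real.exp_pos (ω * t)).le
    have h3 : Real.exp (ω * t) * (Real.exp ((-ω) * t)
        * (τ' t + ω * τ t + 2 * lam / ω)) = τ' t + ω * τ t + 2 * lam / ω := by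
      linear_combination (τ' t + ω * τ t + 2 * lam / ω) * hprod t
    rw [h3] at h2
    nlinarith [h2, h2lamω.le]
  have hG2mono : ∀ s t, T ≤ s → s ≤ t →
      Real.exp (ω * s) * τ s - (Real.exp ((-ω) * T) / (2 * ω)) * Real.exp ((2 * ω) * s)
      ≤ Real.exp (ω * t) * τ t - (Real.exp ((-ω) * T) / (2 * ω)) * Real.exp ((2 * ω) * t) := by
    apply monoAux (f' := fun u =>
      (ω * Real.exp (ω * u)) * τ u + Real.exp (ω * u) * τ' u
        - (Real.exp ((-ω) * T) / (2 * ω)) * ((2 * ω) * Real.exp ((2 * ω) * u)))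
    · intro u hu
      have h0u : (0:ℝ) ≤ u := hT0.trans hu
      exact ((expDeriv ω u).mul (hd1 u h0u)).sub
        ((expDeriv (2 * ω) u).const_mul (Real.exp ((-ω) * T) / (2 * ω)))
    · intro u hu
      have hE2 : Real.exp ((2 * ω) * u)
          = Real.exp (ω * u) * Real.exp (ω * u) := by
        rw [← Real.exp_add]; ring_nf
      rw [hE2, show Real.exp ((-ω) * T) / (2 * ω)
          * (2 * ω * (Real.exp (ω * u) * Real.exp (ω * u)))
          = Real.exp ((-ω) * T) * (Real.exp (ω * u) * Real.exp (ω * u)) from by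
        field_simp]
      have h5 := mul_le_mul_of_nonneg_left (hulow u hu.le) (Real.exp_pos (ω * u)).le
      nlinarith [h5]
  have hG2T : 0 ≤ Real.exp (ω * T) * τ T
      - (Real.exp ((-ω) * T) / (2 * ω)) * Real.exp ((2 * ω) * T) := by
    have hAe : Real.exp ((-ω) * T) * Real.exp ((2 * ω) * T) = Real.exp (ω * T) := by
      rw [← Real.exp_add]; ring_nf
    have hR2 : 1 / (2 * ω) ≤ R := by
      rw [hRdef]; linarith [hRa, hRc]
    have hτhalf : 1 / (2 * ω) ≤ τ T := hR2.trans hτT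
    have hhalf : 1 / (2 * ω) * (2 * ω) = 1 := by
      field_simp
    rw [show Real.exp ((-ω) * T) / (2 * ω) * Real.exp ((2 * ω) * T)
        = Real.exp (ω * T) / (2 * ω) from by
      rw [div_mul_eq_mul_div, hAe]]
    have h7 := mul_le_mul_of_nonneg_left hτhalf (Real.exp_pos (ω * T)).le
    rw [mul_one_div] at h7
    exact sub_nonneg.mpr h7
  set C₁ := Real.exp ((-ω) * T) / (2 * ω) with hC₁def
  have hC₁pos : 0 < C₁ := by
    rw [hC₁def]
    exact div_pos (Real.exp_pos _) (by linarith)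
  have hlb : ∀ t, T ≤ t → C₁ * Real.exp (ω * t) ≤ τ t := by
    intro t ht
    have h1 : (Real.exp ((-ω) * T) / (2 * ω)) * Real.exp ((2 * ω) * t)
        ≤ Real.exp (ω * t) * τ t := by
      linarith [hG2T, hG2mono T t le_rfl ht]
    have hE2 : Real.exp ((2 * ω) * t) = Real.exp (ω * t) * Real.exp (ω * t) := by
      rw [← Real.exp_add]; ring_nf
    rw [hE2] at h1
    rw [hC₁def]
    nlinarith [h1, Real.exp_pos (ω * t)]
  exact ⟨htend, C₁, hC₁pos, C₂, hC₂pos, T, hT0, fun t ht => ⟨hlb t ht, hub t ht⟩⟩
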